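/- Let f : ℝ → ℂ be continuous and 2π-periodic, and for n ∈ ℤ let c_n = (1/(2π)) ∫₀^{2π} f(x)·exp(−i·n·x) dx be its Fourier coefficients. Assume Σ_{n∈ℤ} |c_n| < ∞ and that f(x) = Σ_{n∈ℤ} c_n·exp(i·n·x) for every x ∈ ℝ. Then for every integer N ≥ 1, the equispaced average satisfies (2π/N)·Σ_{m=0}^{N−1} f(2πm/N) = 2π·Σ_{k∈ℤ} c_{kN}. -/

import Mathlib

open Complex

/-- Aliasing identity: for a continuous `2π`-periodic `f : ℝ → ℂ` with absolutely
summable Fourier coefficients `c n` whose Fourier series converges pointwise to `f`,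
the equispaced average satisfies
`(2π/N) Σ_{m=0}^{N-1} f(2πm/N) = 2π Σ_{k∈ℤ} c (k N)`. -/
theorem trapezoid_aliasing (f : ℝ → ℂ) (hf : Continuous f)
    (hper : Function.Periodic f (2 * Real.pi))
    (c : ℤ → ℂ)
    (hc : ∀ n : ℤ, c n =
      (1 / (2 * Real.pi) : ℂ) *
        ∫ x in (0 : ℝ)..(2 * Real.pi), f x * Complex.exp (-Complex.I * (n : ℂ) * (x : ℂ)))
    (hsum : Summable fun n : ℤ => ‖c n‖)
    (hrep : ∀ x : ℝ,
      HasSum (fun n : ℤ => c n * Complex.exp (Complex.I * (n : ℂ) * (x : ℂ))) (f x))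
    (N : ℕ) (hN : 1 ≤ N) :
    ((2 * Real.pi / N : ℝ) : ℂ) *
        ∑ m ∈ Finset.range N, f (2 * Real.pi * m / N) =
      ((2 * Real.pi : ℝ) : ℂ) * ∑' k : ℤ, c (k * (N : ℤ)) := by
  classical
  have hNR : (N : ℝ) ≠ 0 := Nat.cast_ne_zero.2 (by omega)
  have hNC : (N : ℂ) ≠ 0 := Nat.cast_ne_zero.2 (by omega)
  -- the base point z n = exp(2π i n / N)
  set z : ℤ → ℂ := fun n => Complex.exp (Complex.I * (n : ℂ) * (2 * Real.pi / N)) with hz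
  have hzpow : ∀ (n : ℤ) (m : ℕ),
      Complex.exp (Complex.I * (n : ℂ) * ((2 * Real.pi * m / N : ℝ) : ℂ)) = z n ^ m := by
    intro n m
    rw [hz, ← Complex.exp_nat_mul]
    congr 1
    push_cast
    ring
  -- geometric sum
  have hgeom : ∀ n : ℤ, ∑ m ∈ Finset.range N, z n ^ m =
      if (N : ℤ) ∣ n then (N : ℂ) else 0 := by
    intro n
    have hzN : z n ^ N = 1 := by
      rw [hz, ← Complex.exp_nat_mul]
      have h1 : (N : ℂ) * (Complex.I * (n : ℂ) * (2 * Real.pi / N)) =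
          (n : ℂ) * (2 * Real.pi * Complex.I) := by
        field_simp
      rw [h1, Complex.exp_int_mul_two_pi_mul_I]
    by_cases hdvd : (N : ℤ) ∣ n
    · rcases hdvd with ⟨k, hk⟩
      have hz1 : z n = 1 := by
        have h1 : Complex.I * (n : ℂ) * (2 * Real.pi / N) =
            (k : ℂ) * (2 * Real.pi * Complex.I) := by
          have hn : (n : ℂ) = (N : ℂ) * k := by exact_mod_cast congrArg (Int.cast : ℤ → ℂ) hk
          rw [hn]; field_simp
        simp only [hz]
        rw [h1, Complex.exp_int_mul_two_pi_mul_I]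
      rw [if_pos ⟨k, hk⟩]
      simp [hz1]
    · have hz1 : z n ≠ 1 := by
        intro h
        rw [hz] at h
        rw [Complex.exp_eq_one_iff] at h
        obtain ⟨k, hk⟩ := h
        apply hdvd
        refine ⟨k, ?_⟩
        have hI : (Complex.I : ℂ) ≠ 0 := Complex.I_ne_zero
        have hpi : (Real.pi : ℂ) ≠ 0 := Complex.ofReal_ne_zero.2 Real.pi_ne_zero
        field_simp at hk
        have h4 : (n : ℂ) * (2 * Real.pi * Complex.I) =
            ((N : ℂ) * k) * (2 * Real.pi * Complex.I) := by linear_combination (2 * Real.pi * Complex.I) * hk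
        have hne : (2 * (Real.pi : ℂ) * Complex.I) ≠ 0 :=
          mul_ne_zero (mul_ne_zero two_ne_zero hpi) hI
        have h2 : (n : ℂ) = (N : ℂ) * k := mul_right_cancel₀ hne h4
        exact_mod_cast h2
      rw [geom_sum_eq hz1, hzN]
      simp [hdvd]
    -- end hgeom
  -- summability of the pointwise series
  have hsummand : ∀ x : ℝ, Summable fun n : ℤ => c n * Complex.exp (Complex.I * (n : ℂ) * (x : ℂ)) :=
    fun x => (hrep x).summable
  -- swap sum and tsum
  have hswap : ∑ m ∈ Finset.range N, f (2 * Real.pi * m / N) =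
      ∑' n : ℤ, ∑ m ∈ Finset.range N, c n * z n ^ m := by
    have hsw := Summable.tsum_finsetSum (s := Finset.range N)
      (f := fun (m : ℕ) (n : ℤ) => c n * z n ^ m)
      (fun m _ => (hsummand (2 * Real.pi * m / N)).congr fun n => by rw [hzpow n m])
    rw [hsw]
    refine Finset.sum_congr rfl fun m _ => ?_
    rw [← (hrep (2 * Real.pi * m / N)).tsum_eq]
    exact tsum_congr fun n => by rw [hzpow n m]
  -- evaluate inner sum
  have heval : (fun n : ℤ => ∑ m ∈ Finset.range N, c n * z n ^ m) =
      fun n : ℤ => if (N : ℤ) ∣ n then (N : ℂ) * c n else 0 := by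
    funext n
    rw [← Finset.mul_sum, hgeom n]
    split <;> ring
  -- restrict to multiples of N
  have hinj : Function.Injective (fun k : ℤ => k * (N : ℤ)) := fun a b h => by
    have : (N : ℤ) ≠ 0 := by exact_mod_cast hNC
    exact mul_right_cancel₀ this h
  have hrange : Function.support (fun n : ℤ => if (N : ℤ) ∣ n then (N : ℂ) * c n else 0)
      ⊆ Set.range (fun k : ℤ => k * (N : ℤ)) := by
    intro n hn
    simp only [Function.mem_support] at hn
    by_cases hdvd : (N : ℤ) ∣ n
    · obtain ⟨k, hk⟩ := hdvd
      exact ⟨k, by show k * (N : ℤ) = n; rw [hk, mul_comm]⟩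
    · simp [hdvd] at hn
  have htsum : ∑' n : ℤ, (if (N : ℤ) ∣ n then (N : ℂ) * c n else 0) =
      ∑' k : ℤ, (N : ℂ) * c (k * (N : ℤ)) := by
    rw [← hinj.tsum_eq hrange]
    refine tsum_congr fun k => ?_
    simp [dvd_mul_left]
  calc ((2 * Real.pi / N : ℝ) : ℂ) * ∑ m ∈ Finset.range N, f (2 * Real.pi * m / N)
      = ((2 * Real.pi / N : ℝ) : ℂ) * ∑' n : ℤ, (if (N : ℤ) ∣ n then (N : ℂ) * c n else 0) := by
        rw [hswap, ← heval]
    _ = ((2 * Real.pi / N : ℝ) : ℂ) * ((N : ℂ) * ∑' k : ℤ, c (k * (N : ℤ))) := by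
        rw [htsum, tsum_mul_left]
    _ = ((2 * Real.pi : ℝ) : ℂ) * ∑' k : ℤ, c (k * (N : ℤ)) := by
        push_cast
        field_simp
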